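/- Let v, r : ℤ × ℝ → ℝ with v nowhere zero, differentiable in t, satisfying the R-Toda(+1) lattice ∂_t v(n) = v(n)(r(n) − r(n−1)), ∂_t r(n) = r(n)(r(n+1) + v(n+1) − r(n−1) − v(n)). Define v'(n, τ) = 1/v(n, −τ) and r'(n, τ) = r(n, −τ) / (v(n, −τ) v(n+1, −τ)). Then (v', r') satisfies the R-Toda(−1) lattice: ∂_τ v'(n) = r'(n)/v'(n+1) − r'(n−1)/v'(n−1) and ∂_τ r'(n) = r'(n)/v'(n) − r'(n)/v'(n+1) for all n ∈ ℤ. -/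

import Mathlib

/-- The invertible transformation `v' = 1/v`, `r' = r/(v·Ev)`, `t = -τ` maps
the R-Toda(+1) lattice to the R-Toda(−1) lattice. -/
theorem RToda_plus_to_minus
    (v r : ℤ → ℝ → ℝ)
    (hv0 : ∀ n t, v n t ≠ 0)
    (hv : ∀ n t, HasDerivAt (v n) (v n t * (r n t - r (n - 1) t)) t)
    (hr : ∀ n t, HasDerivAt (r n)
      (r n t * (r (n + 1) t + v (n + 1) t - r (n - 1) t - v n t)) t) :
    let v' : ℤ → ℝ → ℝ := fun n τ => 1 / v n (-τ)
    let r' : ℤ → ℝ → ℝ := fun n τ => r n (-τ) / (v n (-τ) * v (n + 1) (-τ))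
    (∀ n τ, HasDerivAt (v' n)
      (r' n τ / v' (n + 1) τ - r' (n - 1) τ / v' (n - 1) τ) τ) ∧
    (∀ n τ, HasDerivAt (r' n)
      (r' n τ / v' n τ - r' n τ / v' (n + 1) τ) τ) := by
  intro v' r'
  have hvc : ∀ (n : ℤ) (τ : ℝ), HasDerivAt (fun τ : ℝ => v n (-τ))
      (v n (-τ) * (r n (-τ) - r (n - 1) (-τ)) * (-1)) τ := fun n τ =>
    (hv n (-τ)).comp τ (hasDerivAt_neg τ)
  have hrc : ∀ (n : ℤ) (τ : ℝ), HasDerivAt (fun τ : ℝ => r n (-τ))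
      (r n (-τ) * (r (n + 1) (-τ) + v (n + 1) (-τ) - r (n - 1) (-τ) - v n (-τ)) * (-1)) τ :=
    fun n τ => (hr n (-τ)).comp τ (hasDerivAt_neg τ)
  constructor
  · intro n τ
    have h := ((hasDerivAt_const τ (1 : ℝ)).div (hvc n τ) (hv0 n (-τ)))
    refine h.congr_deriv (Eq.symm ?_)
    have h1 := hv0 n (-τ)
    have h2 := hv0 (n + 1) (-τ)
    have h3 := hv0 (n - 1) (-τ)
    simp only [v', r']
    field_simp
    ring_nf
    field_simp
  · intro n τ
    have hden : HasDerivAt (fun τ : ℝ => v n (-τ) * v (n + 1) (-τ))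
        (v n (-τ) * (r n (-τ) - r (n - 1) (-τ)) * (-1) * v (n + 1) (-τ) +
          v n (-τ) * (v (n + 1) (-τ) * (r (n + 1) (-τ) - r (n + 1 - 1) (-τ)) * (-1))) τ :=
      (hvc n τ).mul (hvc (n + 1) τ)
    have hden0 : v n (-τ) * v (n + 1) (-τ) ≠ 0 :=
      mul_ne_zero (hv0 n (-τ)) (hv0 (n + 1) (-τ))
    have h := (hrc n τ).div hden hden0
    refine h.congr_deriv ?_
    have h1 := hv0 n (-τ)
    have h2 := hv0 (n + 1) (-τ)
    simp only [v', r', add_sub_cancel_right]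
    field_simp
    ring
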